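/- There exists a constant c > 0, depending only on d and γ, such that for all r ≥ 1, all ξ ≥ 0, and all real t with |t| > ρ/2: |E(t)| ≤ exp( −c ρ^{d₁} |t|^{d/γ} ) · exp( −c ρ² √κ̃₂ ). (Lemma 3.5.) -/

import Mathlib

open MeasureTheory Finset

noncomputable section

/-- ρ = r^{d/2} -/
def rho (d : ℕ) (r : ℝ) : ℝ := r ^ ((d : ℝ) / 2)

/-- tilted cumulant coefficients κ̃_n = d₁ ∫₀¹ e^{ξu/ρ} u^{n-1-d/γ} du -/
def kt (d : ℕ) (γ r ξ : ℝ) (n : ℕ) : ℝ :=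
  (2 - (d : ℝ) / γ) *
    ∫ u in (0:ℝ)..1, Real.exp (ξ * u / rho d r) * u ^ ((n : ℝ) - 1 - (d : ℝ) / γ)

/-- E(t) = exp( d₁ ρ² ∫₀¹ e^{ξu/ρ} (e^{itu/ρ} − 1 − itu/ρ) u^{−1−d/γ} du ) -/
def Efun (d : ℕ) (γ r ξ : ℝ) (t : ℝ) : ℂ :=
  Complex.exp ((((2 - (d : ℝ) / γ) * (rho d r) ^ 2 : ℝ) : ℂ) *
    ∫ u in (0:ℝ)..1,
      ((Real.exp (ξ * u / rho d r) : ℝ) : ℂ) *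
        (Complex.exp (Complex.I * (t : ℂ) * (u : ℂ) / ((rho d r : ℝ) : ℂ)) - 1 -
          Complex.I * (t : ℂ) * (u : ℂ) / ((rho d r : ℝ) : ℂ)) *
        ((u ^ (-1 - (d : ℝ) / γ) : ℝ) : ℂ))

lemma sin_quant {x : ℝ} (hx : 1/8 ≤ x) : Real.sin x ≤ (1 - 1/640) * x := by
  rcases le_or_gt x 2 with h2 | h2
  · have hx0 : (0:ℝ) < x := by linarith
    have h4 : Real.sin (x/4) > x/4 - (x/4)^3/4 :=
      by have := Real.sin_gt_sub_cube (x := x/4) (by linarith); linarith [pow_pos (show (0:ℝ) < x/4 by linarith) 3]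
    have hq1 : (0:ℝ) ≤ 2 - x := by linarith
    have hq2 : (0:ℝ) ≤ 2 + x := by linarith
    have hs4 : Real.sin (x/4) ≥ 15*x/64 := by
      nlinarith [mul_nonneg (mul_nonneg hx0.le hq1) hq2]
    have hcos : Real.cos (x/2) = 1 - 2 * Real.sin (x/4)^2 := by
      have : Real.cos (x/2) = 2 * Real.cos (x/4)^2 - 1 := by
        rw [show x/2 = 2*(x/4) by ring, Real.cos_two_mul]
      rw [this, ← Real.sin_sq_add_cos_sq (x/4)]; ring
    have hcosle : Real.cos (x/2) ≤ 1 - x^2/10 := by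
      rw [hcos]; nlinarith
    have hsin2 : Real.sin (x/2) ≤ x/2 := Real.sin_le (by linarith)
    have hsin2pos : 0 ≤ Real.sin (x/2) := Real.sin_nonneg_of_nonneg_of_le_pi (by linarith)
      (by linarith [Real.pi_gt_three])
    have hcospos : 0 ≤ Real.cos (x/2) := Real.cos_nonneg_of_mem_Icc
      ⟨by linarith [Real.pi_gt_three], by linarith [Real.pi_gt_three]⟩
    have hdouble : Real.sin x = 2 * Real.sin (x/2) * Real.cos (x/2) := by
      rw [show x = 2*(x/2) by ring, Real.sin_two_mul]; ring_nf
    rw [hdouble]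
    calc 2 * Real.sin (x/2) * Real.cos (x/2) ≤ 2 * (x/2) * Real.cos (x/2) := by nlinarith
      _ ≤ 2 * (x/2) * (1 - x^2/10) := by nlinarith
      _ ≤ (1 - 1/640) * x := by nlinarith
  · calc Real.sin x ≤ 1 := Real.sin_le_one x
      _ ≤ (1 - 1/640) * x := by nlinarith

lemma abs_sin_quant' {x : ℝ} (hx : 1/8 ≤ x) : |Real.sin x| ≤ (1 - 1/640) * x := by
  rcases le_or_gt x Real.pi with hπ | hπ
  · rw [abs_of_nonneg (Real.sin_nonneg_of_nonneg_of_le_pi (by linarith) hπ)]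
    exact sin_quant hx
  · have : |Real.sin x| ≤ 1 := Real.abs_sin_le_one x
    nlinarith [Real.pi_gt_three]

lemma abs_sin_quant {x : ℝ} (hx : 1/8 ≤ |x|) : |Real.sin x| ≤ (1 - 1/640) * |x| := by
  rcases abs_cases x with ⟨h1, _⟩ | ⟨h1, _⟩
  · rw [h1] at hx ⊢; exact abs_sin_quant' hx
  · rw [h1] at hx ⊢
    have := abs_sin_quant' (x := -x) hx
    rwa [Real.sin_neg, abs_neg] at this

lemma one_sub_cos_le (y : ℝ) : 1 - Real.cos y ≤ y^2 / 2 := by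
  have h : Real.cos y = 1 - 2 * Real.sin (y/2)^2 := by
    rw [show y = 2*(y/2) by ring, Real.cos_two_mul, ← Real.sin_sq_add_cos_sq (y/2)]; ring
  have hs : |Real.sin (y/2)| ≤ |y/2| := Real.abs_sin_le_abs
  have hs2 : Real.sin (y/2)^2 ≤ (y/2)^2 := by
    nlinarith [sq_abs (Real.sin (y/2)), sq_abs (y/2), abs_nonneg (Real.sin (y/2)), abs_nonneg (y/2)]
  rw [h]; nlinarith

lemma abs_exp_I_bound (x : ℝ) :
    ‖Complex.exp ((x:ℂ) * Complex.I) - 1 - (x:ℂ) * Complex.I‖ ≤ 3 * x^2 := by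
  have h2 : ‖(x:ℂ) * Complex.I‖ = |x| := by
    rw [norm_mul, Complex.norm_I, Complex.norm_real, mul_one, Real.norm_eq_abs]
  rcases le_or_gt |x| 1 with h | h
  · have h1 : ‖(x:ℂ) * Complex.I‖ ≤ 1 := by rw [h2]; exact h
    have := Complex.norm_exp_sub_one_sub_id_le h1
    rw [h2] at this
    nlinarith [sq_nonneg x, abs_nonneg x, sq_abs x]
  · have h1 : ‖Complex.exp ((x:ℂ) * Complex.I)‖ = 1 := by
      rw [Complex.norm_exp]; simp
    calc ‖Complex.exp ((x:ℂ) * Complex.I) - 1 - (x:ℂ) * Complex.I‖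
        ≤ ‖Complex.exp ((x:ℂ) * Complex.I) - 1‖ + ‖(x:ℂ) * Complex.I‖ := norm_sub_le _ _
      _ ≤ (‖Complex.exp ((x:ℂ) * Complex.I)‖ + ‖(1:ℂ)‖) + |x| := by
          gcongr ?_ + ?_
          · exact norm_sub_le _ _
          · rw [h2]
      _ = 2 + |x| := by rw [h1]; norm_num
      _ ≤ 3 * x^2 := by nlinarith [sq_abs x, abs_nonneg x]

lemma re_integrand (a x b : ℝ) :
    ((a:ℂ) * (Complex.exp ((x:ℂ) * Complex.I) - 1 - (x:ℂ) * Complex.I) * (b:ℂ)).re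
      = a * ((Real.cos x - 1) * b) := by
  have : ((a:ℂ) * (Complex.exp ((x:ℂ) * Complex.I) - 1 - (x:ℂ) * Complex.I) * (b:ℂ))
      = ((a*b : ℝ):ℂ) * (Complex.exp ((x:ℂ) * Complex.I) - 1 - (x:ℂ) * Complex.I) := by
    push_cast; ring
  rw [this, Complex.re_ofReal_mul]
  simp only [Complex.sub_re, Complex.exp_ofReal_mul_I_re, Complex.one_re,
    Complex.mul_re, Complex.ofReal_re, Complex.I_re, Complex.ofReal_im, Complex.I_im]
  ring

lemma integrableOn_h (α ρ ξ t : ℝ) (hα0 : 0 < α) (hα1 : α < 1) (hρ : 0 < ρ) (hξ : 0 ≤ ξ) :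
    IntegrableOn (fun u => Real.exp (ξ*u/ρ) * ((1 - Real.cos (t*u/ρ)) * u^(-1-α)))
      (Set.Ioc (0:ℝ) 1) := by
  have hg : IntegrableOn (fun u : ℝ => (3 * Real.exp (ξ/ρ) * (t/ρ)^2) * u^(1-α))
      (Set.Ioc (0:ℝ) 1) :=
    ((intervalIntegral.intervalIntegrable_rpow' (by linarith : (-1:ℝ) < 1-α)).1).const_mul _
  refine hg.integrable.mono' ?_ ?_
  · apply Measurable.aestronglyMeasurable
    fun_prop
  · rw [ae_restrict_iff' measurableSet_Ioc]
    filter_upwards with u hu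
    obtain ⟨hu0, hu1⟩ := hu
    have hcos : 0 ≤ 1 - Real.cos (t*u/ρ) := by linarith [Real.cos_le_one (t*u/ρ)]
    have hup : 0 ≤ u^(-1-α) := Real.rpow_nonneg hu0.le _
    rw [Real.norm_eq_abs, abs_of_nonneg (by positivity)]
    have h1 : Real.exp (ξ*u/ρ) ≤ Real.exp (ξ/ρ) := by
      apply Real.exp_le_exp.2
      apply (div_le_div_iff_of_pos_right hρ).2
      nlinarith
    have h2 : 1 - Real.cos (t*u/ρ) ≤ 3 * (t/ρ)^2 * u^2 := by
      have hc := one_sub_cos_le (t*u/ρ)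
      have he : (t*u/ρ)^2 = (t/ρ)^2 * u^2 := by ring
      nlinarith [mul_nonneg (sq_nonneg (t/ρ)) (sq_nonneg u)]
    have h3 : (u:ℝ)^2 * u^(-1-α) = u^(1-α) := by
      rw [← Real.rpow_two, ← Real.rpow_add hu0, show (2:ℝ) + (-1-α) = 1-α by ring]
    calc Real.exp (ξ*u/ρ) * ((1 - Real.cos (t*u/ρ)) * u^(-1-α))
        ≤ Real.exp (ξ/ρ) * ((3 * (t/ρ)^2 * u^2) * u^(-1-α)) := by
          apply mul_le_mul h1 ?_ (by positivity) (Real.exp_nonneg _)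
          exact mul_le_mul_of_nonneg_right h2 hup
      _ = Real.exp (ξ/ρ) * (3 * (t/ρ)^2 * (u^2 * u^(-1-α))) := by ring
      _ = (3 * Real.exp (ξ/ρ) * (t/ρ)^2) * u^(1-α) := by rw [h3]; ring

lemma integrableOn_F (α ρ ξ t : ℝ) (hα0 : 0 < α) (hα1 : α < 1) (hρ : 0 < ρ) (hξ : 0 ≤ ξ) :
    IntegrableOn (fun u : ℝ => ((Real.exp (ξ*u/ρ) : ℝ):ℂ) *
      (Complex.exp (((t*u/ρ:ℝ):ℂ) * Complex.I) - 1 - ((t*u/ρ:ℝ):ℂ) * Complex.I) *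
      ((u^(-1-α) : ℝ):ℂ)) (Set.Ioc (0:ℝ) 1) := by
  have hg : IntegrableOn (fun u : ℝ => (3 * Real.exp (ξ/ρ) * (t/ρ)^2) * u^(1-α))
      (Set.Ioc (0:ℝ) 1) :=
    ((intervalIntegral.intervalIntegrable_rpow' (by linarith : (-1:ℝ) < 1-α)).1).const_mul _
  refine hg.integrable.mono' ?_ ?_
  · apply Measurable.aestronglyMeasurable
    fun_prop
  · rw [ae_restrict_iff' measurableSet_Ioc]
    filter_upwards with u hu
    obtain ⟨hu0, hu1⟩ := hu
    have hup : 0 ≤ u^(-1-α) := Real.rpow_nonneg hu0.le _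
    rw [norm_mul, norm_mul, Complex.norm_real, Complex.norm_real,
      Real.norm_eq_abs, Real.norm_eq_abs, abs_of_nonneg (Real.exp_nonneg _),
      abs_of_nonneg hup]
    have h1 : Real.exp (ξ*u/ρ) ≤ Real.exp (ξ/ρ) := by
      apply Real.exp_le_exp.2
      apply (div_le_div_iff_of_pos_right hρ).2
      nlinarith
    have h2 : ‖Complex.exp (((t*u/ρ:ℝ):ℂ) * Complex.I) - 1 - ((t*u/ρ:ℝ):ℂ) * Complex.I‖
        ≤ 3 * (t/ρ)^2 * u^2 := by
      have := abs_exp_I_bound (t*u/ρ)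
      calc ‖_‖ ≤ 3 * (t*u/ρ)^2 := this
        _ = 3 * (t/ρ)^2 * u^2 := by ring
    have h3 : (u:ℝ)^2 * u^(-1-α) = u^(1-α) := by
      rw [← Real.rpow_two, ← Real.rpow_add hu0, show (2:ℝ) + (-1-α) = 1-α by ring]
    have hnn : (0:ℝ) ≤ ‖Complex.exp (((t*u/ρ:ℝ):ℂ) * Complex.I) - 1 - ((t*u/ρ:ℝ):ℂ) * Complex.I‖ :=
      norm_nonneg _
    calc Real.exp (ξ*u/ρ) * ‖_‖ * (u^(-1-α))
        ≤ Real.exp (ξ/ρ) * (3 * (t/ρ)^2 * u^2) * u^(-1-α) := by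
          apply mul_le_mul_of_nonneg_right ?_ hup
          exact mul_le_mul h1 h2 hnn (Real.exp_nonneg _)
      _ = (3 * Real.exp (ξ/ρ) * (t/ρ)^2) * (u^2 * u^(-1-α)) := by ring
      _ = (3 * Real.exp (ξ/ρ) * (t/ρ)^2) * u^(1-α) := by rw [h3]

lemma abs_Efun (d : ℕ) (γ r ξ t : ℝ) (hα0 : 0 < (d:ℝ)/γ) (hα1 : (d:ℝ)/γ < 1)
    (hρ : 0 < rho d r) (hξ : 0 ≤ ξ) :
    ‖Efun d γ r ξ t‖ =
      Real.exp (-((2 - (d:ℝ)/γ) * rho d r ^ 2 *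
        ∫ u in Set.Ioc (0:ℝ) 1,
          Real.exp (ξ*u/rho d r) * ((1 - Real.cos (t*u/rho d r)) * u^(-1-(d:ℝ)/γ)))) := by
  set ρ := rho d r
  set α := (d:ℝ)/γ
  have hcongr : ∀ u : ℝ, ((Real.exp (ξ * u / ρ) : ℝ) : ℂ) *
        (Complex.exp (Complex.I * (t : ℂ) * (u : ℂ) / ((ρ : ℝ) : ℂ)) - 1 -
          Complex.I * (t : ℂ) * (u : ℂ) / ((ρ : ℝ) : ℂ)) * ((u ^ (-1 - α) : ℝ) : ℂ)
      = ((Real.exp (ξ*u/ρ) : ℝ):ℂ) *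
        (Complex.exp (((t*u/ρ:ℝ):ℂ) * Complex.I) - 1 - ((t*u/ρ:ℝ):ℂ) * Complex.I) *
        ((u^(-1-α) : ℝ):ℂ) := by
    intro u
    have : Complex.I * (t : ℂ) * (u : ℂ) / ((ρ : ℝ) : ℂ) = ((t*u/ρ:ℝ):ℂ) * Complex.I := by
      push_cast; ring
    rw [this]
  unfold Efun
  rw [Complex.norm_exp]
  congr 1
  rw [intervalIntegral.integral_congr (g := fun u => ((Real.exp (ξ*u/ρ) : ℝ):ℂ) *
        (Complex.exp (((t*u/ρ:ℝ):ℂ) * Complex.I) - 1 - ((t*u/ρ:ℝ):ℂ) * Complex.I) *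
        ((u^(-1-α) : ℝ):ℂ)) (fun u _ => hcongr u)]
  rw [intervalIntegral.integral_of_le (by norm_num : (0:ℝ) ≤ 1)]
  rw [Complex.re_ofReal_mul]
  have hre := integral_re (μ := volume.restrict (Set.Ioc (0:ℝ) 1)) (integrableOn_F α ρ ξ t hα0 hα1 hρ hξ)
  simp only [RCLike.re_to_complex] at hre
  rw [← hre]
  have : ∀ u : ℝ, (((Real.exp (ξ*u/ρ) : ℝ):ℂ) *
        (Complex.exp (((t*u/ρ:ℝ):ℂ) * Complex.I) - 1 - ((t*u/ρ:ℝ):ℂ) * Complex.I) *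
        ((u^(-1-α) : ℝ):ℂ)).re = -(Real.exp (ξ*u/ρ) * ((1 - Real.cos (t*u/ρ)) * u^(-1-α))) := by
    intro u
    rw [re_integrand]
    ring
  rw [MeasureTheory.integral_congr_ae (Filter.Eventually.of_forall (fun u => this u))]
  rw [MeasureTheory.integral_neg]
  ring

lemma lemA (α ρ ξ t : ℝ) (hα0 : 0 < α) (hα1 : α < 1) (hρ1 : 1 ≤ ρ) (hξ : 0 ≤ ξ)
    (ht : ρ/2 < |t|) :
    (1 - Real.cos (1/4))/2 * (|t|/ρ)^α ≤
      ∫ u in Set.Ioc (0:ℝ) 1, Real.exp (ξ*u/ρ) * ((1 - Real.cos (t*u/ρ)) * u^(-1-α)) := by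
  have hρ0 : (0:ℝ) < ρ := lt_of_lt_of_le one_pos hρ1
  set T := |t| with hT
  have hT0 : 0 < T := lt_of_le_of_lt (by positivity) ht
  set a := ρ/(4*T) with ha_def
  set b := ρ/(2*T) with hb_def
  have ha0 : 0 < a := by positivity
  have hb0 : 0 < b := by positivity
  have hab : a ≤ b := by
    rw [ha_def, hb_def]
    apply div_le_div_of_nonneg_left hρ0.le (by positivity) (by linarith)
  have hb1 : b ≤ 1 := by
    rw [hb_def, div_le_one (by positivity)]; linarith
  have hsub : Set.Ioc a b ⊆ Set.Ioc (0:ℝ) 1 := Set.Ioc_subset_Ioc (by linarith) hb1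
  have hint := integrableOn_h α ρ ξ t hα0 hα1 hρ0 hξ
  have hnn : 0 ≤ᵐ[volume.restrict (Set.Ioc (0:ℝ) 1)]
      (fun u => Real.exp (ξ*u/ρ) * ((1 - Real.cos (t*u/ρ)) * u^(-1-α))) := by
    rw [Filter.EventuallyLE, ae_restrict_iff' measurableSet_Ioc]
    filter_upwards with u hu
    have h1 : 0 ≤ 1 - Real.cos (t*u/ρ) := by linarith [Real.cos_le_one (t*u/ρ)]
    have h2 : 0 ≤ u^(-1-α) := Real.rpow_nonneg hu.1.le (-1-α)
    exact mul_nonneg (Real.exp_nonneg _) (mul_nonneg h1 h2)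
  set m := (1 - Real.cos (1/4)) * ((2*T/ρ)^(1+α)) with hm_def
  have hcos14 : 0 ≤ 1 - Real.cos (1/4) := by linarith [Real.cos_le_one (1/4 : ℝ)]
  have hm0 : 0 ≤ m := by positivity
  have step2 : m * (b - a) ≤ ∫ u in Set.Ioc a b,
      Real.exp (ξ*u/ρ) * ((1 - Real.cos (t*u/ρ)) * u^(-1-α)) := by
    have hconst : ∫ _ in Set.Ioc a b, m ∂volume = m * (b - a) := by
      rw [setIntegral_const, Real.volume_real_Ioc_of_le hab, smul_eq_mul]
      ring
    rw [← hconst]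
    apply setIntegral_mono_on (integrableOn_const (C := m) (s := Set.Ioc a b) (μ := volume) (by
      rw [Real.volume_Ioc]; exact ENNReal.ofReal_ne_top)) (hint.mono_set hsub)
      measurableSet_Ioc
    intro u hu
    obtain ⟨hua, hub⟩ := hu
    have hu0 : 0 < u := lt_trans ha0 hua
    -- exp factor ≥ 1
    have h1 : 1 ≤ Real.exp (ξ*u/ρ) := Real.one_le_exp (by positivity)
    -- cos factor
    have habs : |t*u/ρ| = T*u/ρ := by
      rw [abs_div, abs_mul, abs_of_pos hu0, abs_of_pos hρ0]
    have hx1 : 1/4 ≤ T*u/ρ := by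
      rw [ha_def] at hua
      rw [le_div_iff₀ hρ0]
      rw [div_lt_iff₀ (by positivity)] at hua
      nlinarith
    have hx2 : T*u/ρ ≤ 1/2 := by
      rw [hb_def] at hub
      rw [div_le_iff₀ hρ0]
      rw [le_div_iff₀ (by positivity)] at hub
      nlinarith
    have hcos : Real.cos (t*u/ρ) ≤ Real.cos (1/4) := by
      rw [← Real.cos_abs, habs]
      exact Real.cos_le_cos_of_nonneg_of_le_pi (by norm_num)
        (by linarith [Real.pi_gt_three]) hx1
    -- rpow factor
    have hrp : b^(-1-α) ≤ u^(-1-α) :=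
      Real.rpow_le_rpow_of_nonpos hu0 hub (by linarith)
    have hbval : b^(-1-α) = (2*T/ρ)^(1+α) := by
      rw [show (-1-α : ℝ) = -(1+α) by ring, Real.rpow_neg hb0.le,
        ← Real.inv_rpow hb0.le, hb_def, inv_div]
    rw [hbval] at hrp
    have h2T : (0:ℝ) ≤ (2*T/ρ)^(1+α) := Real.rpow_nonneg (by positivity) _
    calc m = 1 * ((1 - Real.cos (1/4)) * (2*T/ρ)^(1+α)) := by rw [hm_def]; ring
      _ ≤ Real.exp (ξ*u/ρ) * ((1 - Real.cos (t*u/ρ)) * u^(-1-α)) := by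
          apply mul_le_mul h1 ?_ (by positivity) (Real.exp_nonneg _)
          apply mul_le_mul (by linarith) hrp h2T (by linarith)
  have step1 : ∫ u in Set.Ioc a b, Real.exp (ξ*u/ρ) * ((1 - Real.cos (t*u/ρ)) * u^(-1-α))
      ≤ ∫ u in Set.Ioc (0:ℝ) 1, Real.exp (ξ*u/ρ) * ((1 - Real.cos (t*u/ρ)) * u^(-1-α)) :=
    setIntegral_mono_set hint hnn (HasSubset.Subset.eventuallyLE hsub)
  -- arithmetic: m * (b - a) ≥ (1-cos(1/4))/2 * (T/ρ)^α
  have harith : (1 - Real.cos (1/4))/2 * (T/ρ)^α ≤ m * (b - a) := by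
    have hba : b - a = ρ/(4*T) := by rw [hb_def, ha_def]; field_simp; ring
    have hsplit : (2*T/ρ)^(1+α) = (2*T/ρ) * (2*T/ρ)^α := by
      rw [Real.rpow_add (by positivity), Real.rpow_one]
    have hmono : (T/ρ)^α ≤ (2*T/ρ)^α := by
      apply Real.rpow_le_rpow (by positivity) ?_ hα0.le
      rw [mul_div_assoc]
      have : 0 ≤ T/ρ := by positivity
      linarith
    have hTρ : (0:ℝ) ≤ (T/ρ)^α := Real.rpow_nonneg (by positivity) _
    rw [hm_def, hba, hsplit]
    have hkey : (2*T/ρ) * (ρ/(4*T)) = 1/2 := by field_simp; ring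
    calc (1 - Real.cos (1/4))/2 * (T/ρ)^α
        ≤ (1 - Real.cos (1/4))/2 * (2*T/ρ)^α := by
          apply mul_le_mul_of_nonneg_left hmono (by linarith)
      _ = (1 - Real.cos (1/4)) * ((2*T/ρ) * (2*T/ρ)^α) * (ρ/(4*T)) := by
          rw [show (1 - Real.cos (1/4)) * ((2*T/ρ) * (2*T/ρ)^α) * (ρ/(4*T))
            = (1 - Real.cos (1/4)) * (2*T/ρ)^α * ((2*T/ρ) * (ρ/(4*T))) by ring, hkey]
          ring
  linarith

lemma lemB (α ρ ξ t : ℝ) (hα0 : 0 < α) (hα1 : α < 1) (hρ1 : 1 ≤ ρ) (hξ : 0 ≤ ξ)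
    (ht : ρ/2 < |t|) :
    Real.exp (ξ/(2*ρ)) * (1/1280) ≤
      ∫ u in Set.Ioc (0:ℝ) 1, Real.exp (ξ*u/ρ) * ((1 - Real.cos (t*u/ρ)) * u^(-1-α)) := by
  have hρ0 : (0:ℝ) < ρ := lt_of_lt_of_le one_pos hρ1
  have hT0 : 0 < |t| := lt_of_le_of_lt (by positivity) ht
  have ht0 : t ≠ 0 := by intro h; rw [h, abs_zero] at hT0; exact lt_irrefl _ hT0
  set s := t/ρ with hs_def
  have hs0 : s ≠ 0 := div_ne_zero ht0 (ne_of_gt hρ0)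
  have hsabs : 1/2 < |s| := by
    rw [hs_def, abs_div, abs_of_pos hρ0, lt_div_iff₀ hρ0]
    linarith
  have hint := integrableOn_h α ρ ξ t hα0 hα1 hρ0 hξ
  have hsub : Set.Ioc (1/2 : ℝ) 1 ⊆ Set.Ioc (0:ℝ) 1 := Set.Ioc_subset_Ioc (by norm_num) le_rfl
  have hnn : 0 ≤ᵐ[volume.restrict (Set.Ioc (0:ℝ) 1)]
      (fun u => Real.exp (ξ*u/ρ) * ((1 - Real.cos (t*u/ρ)) * u^(-1-α))) := by
    rw [Filter.EventuallyLE, ae_restrict_iff' measurableSet_Ioc]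
    filter_upwards with u hu
    have h1 : 0 ≤ 1 - Real.cos (t*u/ρ) := by linarith [Real.cos_le_one (t*u/ρ)]
    have h2 : 0 ≤ u^(-1-α) := Real.rpow_nonneg hu.1.le (-1-α)
    exact mul_nonneg (Real.exp_nonneg _) (mul_nonneg h1 h2)
  have step1 : ∫ u in Set.Ioc (1/2:ℝ) 1, Real.exp (ξ*u/ρ) * ((1 - Real.cos (t*u/ρ)) * u^(-1-α))
      ≤ ∫ u in Set.Ioc (0:ℝ) 1, Real.exp (ξ*u/ρ) * ((1 - Real.cos (t*u/ρ)) * u^(-1-α)) :=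
    setIntegral_mono_set hint hnn (HasSubset.Subset.eventuallyLE hsub)
  -- pointwise lower bound on Ioc (1/2) 1
  have hcont : Continuous (fun u : ℝ => Real.exp (ξ/(2*ρ)) * (1 - Real.cos (s*u))) :=
    continuous_const.mul (continuous_const.sub
      (Real.continuous_cos.comp (continuous_const.mul continuous_id)))
  have step2 : ∫ u in Set.Ioc (1/2:ℝ) 1, Real.exp (ξ/(2*ρ)) * (1 - Real.cos (s*u))
      ≤ ∫ u in Set.Ioc (1/2:ℝ) 1, Real.exp (ξ*u/ρ) * ((1 - Real.cos (t*u/ρ)) * u^(-1-α)) := by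
    apply setIntegral_mono_on (hcont.integrableOn_Ioc) (hint.mono_set hsub) measurableSet_Ioc
    intro u hu
    obtain ⟨hu12, hu1⟩ := hu
    have hu0 : 0 < u := by linarith
    have hsu : s*u = t*u/ρ := by rw [hs_def]; ring
    have hcos : 0 ≤ 1 - Real.cos (t*u/ρ) := by linarith [Real.cos_le_one (t*u/ρ)]
    have h1 : Real.exp (ξ/(2*ρ)) ≤ Real.exp (ξ*u/ρ) := by
      apply Real.exp_le_exp.2
      rw [div_le_div_iff₀ (by positivity) hρ0]
      nlinarith [mul_nonneg (mul_nonneg hξ hρ0.le) (by linarith : (0:ℝ) ≤ 2*u-1)]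
    have h2 : (1:ℝ) ≤ u^(-1-α) :=
      Real.one_le_rpow_of_pos_of_le_one_of_nonpos hu0 hu1 (by linarith)
    rw [hsu]
    calc Real.exp (ξ/(2*ρ)) * (1 - Real.cos (t*u/ρ))
        ≤ Real.exp (ξ*u/ρ) * (1 - Real.cos (t*u/ρ)) :=
          mul_le_mul_of_nonneg_right h1 hcos
      _ = Real.exp (ξ*u/ρ) * ((1 - Real.cos (t*u/ρ)) * 1) := by ring
      _ ≤ Real.exp (ξ*u/ρ) * ((1 - Real.cos (t*u/ρ)) * u^(-1-α)) := by
          apply mul_le_mul_of_nonneg_left ?_ (Real.exp_nonneg _)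
          exact mul_le_mul_of_nonneg_left h2 hcos
  -- compute the explicit integral
  have hderiv : ∀ u ∈ Set.uIcc (1/2:ℝ) 1, HasDerivAt (fun u => u - Real.sin (s*u)/s)
      (1 - Real.cos (s*u)) u := by
    intro u _
    have h1 : HasDerivAt (fun u : ℝ => s*u) s u := by
      simpa using (hasDerivAt_id u).const_mul s
    have h2 : HasDerivAt (fun u : ℝ => Real.sin (s*u)) (Real.cos (s*u) * s) u :=
      (Real.hasDerivAt_sin (s*u)).comp u h1
    have h3 := (h2.div_const s)
    have h4 := (hasDerivAt_id u).sub h3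
    have : Real.cos (s*u) * s / s = Real.cos (s*u) := by field_simp
    rwa [this] at h4
  have hicont : IntervalIntegrable (fun u => 1 - Real.cos (s*u)) volume (1/2) 1 := by
    exact (continuous_const.sub
      (Real.continuous_cos.comp (continuous_const.mul continuous_id))).intervalIntegrable _ _
  have hval : ∫ u in (1/2:ℝ)..1, (1 - Real.cos (s*u))
      = 1/2 - (Real.sin s - Real.sin (s/2))/s := by
    rw [intervalIntegral.integral_eq_sub_of_hasDerivAt hderiv hicont]
    have : s * (1/2 : ℝ) = s/2 := by ring
    rw [mul_one, this]
    ring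
  -- bound on the explicit value
  have hbound : (1:ℝ)/1280 ≤ 1/2 - (Real.sin s - Real.sin (s/2))/s := by
    have hss : Real.sin s - Real.sin (s/2) = 2 * Real.sin (s/4) * Real.cos (3*s/4) := by
      rw [Real.sin_sub_sin]
      norm_num
      ring_nf
    have h14 : 1/8 ≤ |s/4| := by rw [abs_div]; norm_num; linarith [hsabs]
    have hq := abs_sin_quant h14
    rw [abs_div] at hq
    norm_num at hq
    have hcos34 : |Real.cos (3*s/4)| ≤ 1 := Real.abs_cos_le_one _
    have habs : |Real.sin s - Real.sin (s/2)| ≤ (1 - 1/640) * |s| / 2 := by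
      rw [hss, abs_mul, abs_mul]
      have h1 : |Real.sin (s/4)| ≤ (1 - 1/640) * |s| / 4 := by linarith
      calc |(2:ℝ)| * |Real.sin (s/4)| * |Real.cos (3*s/4)|
          ≤ |(2:ℝ)| * |Real.sin (s/4)| * 1 := by
            apply mul_le_mul_of_nonneg_left hcos34 (by positivity)
        _ = 2 * |Real.sin (s/4)| := by rw [abs_two]; ring
        _ ≤ (1 - 1/640) * |s| / 2 := by linarith
    have hdivb : |(Real.sin s - Real.sin (s/2))/s| ≤ (1 - 1/640)/2 := by
      rw [abs_div]
      rw [div_le_iff₀ (by positivity : (0:ℝ) < |s|)]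
      calc |Real.sin s - Real.sin (s/2)| ≤ (1 - 1/640) * |s| / 2 := habs
        _ = (1 - 1/640)/2 * |s| := by ring
    have := le_abs_self ((Real.sin s - Real.sin (s/2))/s)
    linarith
  -- put together
  have hIoc : ∫ u in Set.Ioc (1/2:ℝ) 1, Real.exp (ξ/(2*ρ)) * (1 - Real.cos (s*u))
      = Real.exp (ξ/(2*ρ)) * (1/2 - (Real.sin s - Real.sin (s/2))/s) := by
    rw [← intervalIntegral.integral_of_le (by norm_num : (1/2:ℝ) ≤ 1),
      intervalIntegral.integral_const_mul, hval]
  have hexp0 : 0 < Real.exp (ξ/(2*ρ)) := Real.exp_pos _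
  have : Real.exp (ξ/(2*ρ)) * (1/1280) ≤ Real.exp (ξ/(2*ρ)) * (1/2 - (Real.sin s - Real.sin (s/2))/s) :=
    mul_le_mul_of_nonneg_left hbound hexp0.le
  rw [← hIoc] at this
  linarith

lemma lemK (d : ℕ) (γ r ξ : ℝ) (hα0 : 0 < (d:ℝ)/γ) (hα1 : (d:ℝ)/γ < 1)
    (hρ0 : 0 < rho d r) (hξ : 0 ≤ ξ) :
    Real.sqrt (kt d γ r ξ 2) ≤ Real.exp (ξ/(2*(rho d r))) := by
  set ρ := rho d r
  set α := (d:ℝ)/γ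
  have hexp : ((2:ℕ):ℝ) - 1 - α = 1 - α := by push_cast; ring
  have hcont1 : Continuous (fun u : ℝ => u ^ (1-α)) :=
    Real.continuous_rpow_const (by linarith)
  have hcont2 : Continuous (fun u : ℝ => Real.exp (ξ*u/ρ) * u ^ (1-α)) :=
    ((Real.continuous_exp.comp ((continuous_const.mul continuous_id).div_const ρ))).mul hcont1
  have hcont3 : Continuous (fun u : ℝ => Real.exp (ξ/ρ) * u ^ (1-α)) :=
    continuous_const.mul hcont1
  have hmono : ∫ u in (0:ℝ)..1, Real.exp (ξ*u/ρ) * u ^ (1-α)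
      ≤ ∫ u in (0:ℝ)..1, Real.exp (ξ/ρ) * u ^ (1-α) := by
    apply intervalIntegral.integral_mono_on (by norm_num)
      (hcont2.intervalIntegrable _ _) (hcont3.intervalIntegrable _ _)
    intro u hu
    obtain ⟨hu0, hu1⟩ := hu
    have h1 : Real.exp (ξ*u/ρ) ≤ Real.exp (ξ/ρ) := by
      apply Real.exp_le_exp.2
      rw [div_le_div_iff₀ hρ0 hρ0]
      nlinarith [mul_nonneg (mul_nonneg hξ hρ0.le) (by linarith : (0:ℝ) ≤ 1-u)]
    exact mul_le_mul_of_nonneg_right h1 (Real.rpow_nonneg hu0 _)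
  have hrval : ∫ u in (0:ℝ)..1, u ^ (1-α) = 1/(2-α) := by
    rw [integral_rpow (Or.inl (by linarith))]
    rw [Real.one_rpow, Real.zero_rpow (by linarith : (1:ℝ)-α+1 ≠ 0)]
    ring_nf
  have hval : ∫ u in (0:ℝ)..1, Real.exp (ξ/ρ) * u ^ (1-α) = Real.exp (ξ/ρ) * (1/(2-α)) := by
    rw [intervalIntegral.integral_const_mul, hrval]
  have hkt : kt d γ r ξ 2 ≤ Real.exp (ξ/ρ) := by
    unfold kt
    rw [hexp]
    calc (2 - α) * ∫ u in (0:ℝ)..1, Real.exp (ξ*u/ρ) * u ^ (1-α)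
        ≤ (2 - α) * (Real.exp (ξ/ρ) * (1/(2-α))) := by
          apply mul_le_mul_of_nonneg_left ?_ (by linarith)
          rw [← hval]; exact hmono
      _ = Real.exp (ξ/ρ) := by
          field_simp
          rw [div_self (by linarith : (2:ℝ)-α ≠ 0)]
  calc Real.sqrt (kt d γ r ξ 2) ≤ Real.sqrt (Real.exp (ξ/ρ)) := Real.sqrt_le_sqrt hkt
    _ = Real.exp (ξ/(2*ρ)) := by
      rw [show ξ/ρ = ξ/(2*ρ) + ξ/(2*ρ) by ring, Real.exp_add]
      exact Real.sqrt_mul_self (Real.exp_nonneg _)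

/-- Lemma 3.5 (upper tail): tail bound on |E(t)| for |t| > ρ/2. -/
theorem tail_bound_E_upper (d : ℕ) (hd : 1 ≤ d) (γ : ℝ) (hγ : (d : ℝ) < γ) :
    ∃ c : ℝ, 0 < c ∧
      ∀ (r : ℝ), 1 ≤ r → ∀ ξ : ℝ, 0 ≤ ξ → ∀ t : ℝ, rho d r / 2 < |t| →
        ‖Efun d γ r ξ t‖ ≤
          Real.exp (-c * rho d r ^ (2 - (d : ℝ) / γ) * |t| ^ ((d : ℝ) / γ)) *
            Real.exp (-c * rho d r ^ 2 * Real.sqrt (kt d γ r ξ 2)) := by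
  -- main proof
  have hd0 : (0:ℝ) < d := by exact_mod_cast Nat.lt_of_lt_of_le Nat.zero_lt_one hd
  have hγ0 : 0 < γ := lt_trans hd0 hγ
  have hα0 : 0 < (d:ℝ)/γ := div_pos hd0 hγ0
  have hα1 : (d:ℝ)/γ < 1 := (div_lt_one hγ0).2 hγ
  have hcos14 : Real.cos (1/4) < 1 := by
    have := Real.cos_lt_cos_of_nonneg_of_le_pi (le_refl (0:ℝ))
      (by linarith [Real.pi_gt_three]) (by norm_num : (0:ℝ) < 1/4)
    rwa [Real.cos_zero] at this
  refine ⟨min ((1 - Real.cos (1/4))/4) (1/2560), lt_min (by linarith) (by norm_num), ?_⟩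
  set c := min ((1 - Real.cos (1/4))/4) (1/2560) with hc_def
  have hc1 : c ≤ (1 - Real.cos (1/4))/4 := min_le_left _ _
  have hc2 : c ≤ 1/2560 := min_le_right _ _
  intro r hr ξ hξ t ht
  set α := (d:ℝ)/γ with hα_def
  set ρ := rho d r with hρ_def
  have hρ1 : 1 ≤ ρ := Real.one_le_rpow hr (by positivity)
  have hρ0 : (0:ℝ) < ρ := lt_of_lt_of_le one_pos hρ1
  set T := |t| with hT_def
  have hT0 : 0 < T := lt_of_le_of_lt (by positivity) ht
  set Ih := ∫ u in Set.Ioc (0:ℝ) 1,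
      Real.exp (ξ*u/ρ) * ((1 - Real.cos (t*u/ρ)) * u^(-1-α)) with hIh_def
  have hE := abs_Efun d γ r ξ t hα0 hα1 hρ0 hξ
  have hA := lemA α ρ ξ t hα0 hα1 hρ1 hξ ht
  have hB := lemB α ρ ξ t hα0 hα1 hρ1 hξ ht
  have hk := lemK d γ r ξ hα0 hα1 hρ0 hξ
  rw [hE, ← Real.exp_add]
  apply Real.exp_le_exp.2
  -- reduce to real inequality
  have hsq0 : 0 ≤ Real.sqrt (kt d γ r ξ 2) := Real.sqrt_nonneg _
  have hρ2 : (0:ℝ) < ρ^2 := by positivity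
  -- rpow identity
  have hX : ρ^2 * (T/ρ)^α = ρ^(2-α) * T^α := by
    rw [Real.div_rpow (abs_nonneg t) hρ0.le, Real.rpow_sub hρ0, Real.rpow_two]
    field_simp
    rfl
  have hX0 : 0 ≤ ρ^(2-α) * T^α :=
    mul_nonneg (Real.rpow_nonneg hρ0.le _) (Real.rpow_nonneg (abs_nonneg t) _)
  -- HA' : (1-cos(1/4))/2 * (ρ^(2-α) T^α) ≤ ρ^2 * Ih
  have HA' : (1 - Real.cos (1/4))/2 * (ρ^(2-α) * T^α) ≤ ρ^2 * Ih := by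
    have := mul_le_mul_of_nonneg_left hA hρ2.le
    calc (1 - Real.cos (1/4))/2 * (ρ^(2-α) * T^α)
        = ρ^2 * ((1 - Real.cos (1/4))/2 * (T/ρ)^α) := by rw [← hX]; ring
      _ ≤ ρ^2 * Ih := this
  -- HB' : ρ^2 * sqrt(kt) ≤ 1280 * (ρ^2 * Ih)
  have hsk : Real.sqrt (kt d γ r ξ 2) * (1/1280) ≤ Ih := by
    have h' : Real.sqrt (kt d γ r ξ 2) * (1/1280) ≤ Real.exp (ξ/(2*ρ)) * (1/1280) := by
      apply mul_le_mul_of_nonneg_right hk (by norm_num)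
    linarith
  have HB' : ρ^2 * Real.sqrt (kt d γ r ξ 2) * (1/1280) ≤ ρ^2 * Ih := by
    have := mul_le_mul_of_nonneg_left hsk hρ2.le
    calc ρ^2 * Real.sqrt (kt d γ r ξ 2) * (1/1280)
        = ρ^2 * (Real.sqrt (kt d γ r ξ 2) * (1/1280)) := by ring
      _ ≤ ρ^2 * Ih := this
  have hIh0 : 0 ≤ Ih := by
    have := Real.exp_pos (ξ/(2*ρ))
    nlinarith [hB]
  have hmul : ρ^2 * Ih ≤ (2 - α) * ρ^2 * Ih := by
    nlinarith [mul_nonneg hρ2.le hIh0]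
  have h1 : c * (ρ^(2-α) * T^α) ≤ (1 - Real.cos (1/4))/4 * (ρ^(2-α) * T^α) :=
    mul_le_mul_of_nonneg_right hc1 hX0
  have h2 : c * (ρ^2 * Real.sqrt (kt d γ r ξ 2)) ≤ (1/2560) * (ρ^2 * Real.sqrt (kt d γ r ξ 2)) :=
    mul_le_mul_of_nonneg_right hc2 (by positivity)
  linarith [h1, h2, HA', HB', hmul]
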